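/- All mixed forests with the same underlying graph are cospectral: if M and M' are mixed multigraphs whose common underlying multigraph is a forest, then N(M) and N(M') have the same spectrum. -/
import Mathlib


open Complex Finset

noncomputable section

/-- The primitive sixth root of unity `ω = 1/2 + (√3/2)i`. -/
def omega6 : ℂ := ⟨1/2, Real.sqrt 3 / 2⟩

/-- A loopless undirected multigraph with vertex type `V` and edge type `E`:
each edge has a pair of distinct endpoints. -/
structure Multigraph (V E : Type) where
  ends : E → Sym2 V
  loopless : ∀ e, ¬ (ends e).IsDiag

variable {V E : Type}

/-- A mixed multigraph with underlying multigraph `G`: each edge is either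
unoriented (`none`) or oriented (`some (u, v)`, an arc from `u` to `v`),
the orientation is compatible with the endpoints, and there are no digons
(two parallel edges oriented in opposite directions). -/
structure MixedOrientation (G : Multigraph V E) where
  orient : E → Option (V × V)
  compat : ∀ e a b, orient e = some (a, b) → G.ends e = s(a, b)
  noDigon : ∀ e f a b, G.ends e = G.ends f → orient e = some (a, b) → orient f ≠ some (b, a)

/-- The underlying graph of `G`, viewed as the mixed multigraph with no oriented edges. -/
def Multigraph.triv (G : Multigraph V E) : MixedOrientation G where
  orient := fun _ => none
  compat := fun _ _ _ h => by simp at h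
  noDigon := fun _ _ _ _ _ h => by simp at h

variable [DecidableEq V]

/-- The contribution of edge `e`, traversed from `u` to `v`, to the Hermitian adjacency
matrix entry `N_{uv}` and to walk weights: `1` if `e` is unoriented, `ω` if `e` is an arc
from `u` to `v`, and `conj ω` if `e` is an arc from `v` to `u`. -/
def stepWeight {G : Multigraph V E} (M : MixedOrientation G) (e : E) (u v : V) : ℂ :=
  match M.orient e with
  | none => 1
  | some (a, _) => if a = u then omega6 else (starRingEnd ℂ) omega6

/-- The Hermitian adjacency matrix `N(M)` of a mixed multigraph:
`N_{uv} = e{u,v} + e(u,v)·ω + e(v,u)·conj ω`. -/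
def herm [Fintype V] [Fintype E] {G : Multigraph V E} (M : MixedOrientation G) :
    Matrix V V ℂ :=
  Matrix.of fun u v => ∑ e : E, if G.ends e = s(u, v) then stepWeight M e u v else 0

/-- A (mixed) cycle in the multigraph `G`: a cyclic sequence of `n ≥ 2` distinct vertices
joined by `n` distinct edges. -/
structure MixedCycle (G : Multigraph V E) where
  n : ℕ
  two_le : 2 ≤ n
  vert : ZMod n → V
  edge : ZMod n → E
  vert_inj : Function.Injective vert
  edge_inj : Function.Injective edge
  ends_eq : ∀ i, G.ends (edge i) = s(vert i, vert (i + 1))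

/-- The weight `wt(C) = ω^f · (conj ω)^b` of a mixed cycle `C` in `M`, traversed in
the direction given by its parametrization. -/
def cycleWeight {G : Multigraph V E} (M : MixedOrientation G) (C : MixedCycle G) : ℂ :=
  haveI : NeZero C.n := ⟨by have := C.two_le; omega⟩
  ∏ i : ZMod C.n, stepWeight M (C.edge i) (C.vert i) (C.vert (i + 1))

/-- The value `ν(C) = wt(C) + conj (wt(C))` of a mixed cycle. -/
def nu {G : Multigraph V E} (M : MixedOrientation G) (C : MixedCycle G) : ℂ :=
  cycleWeight M C + (starRingEnd ℂ) (cycleWeight M C)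

/-- The number of forward arcs of a mixed cycle (relative to its direction). -/
def fCount {G : Multigraph V E} (M : MixedOrientation G) (C : MixedCycle G) : ℕ :=
  haveI : NeZero C.n := ⟨by have := C.two_le; omega⟩
  (Finset.univ.filter fun i : ZMod C.n =>
    M.orient (C.edge i) = some (C.vert i, C.vert (i + 1))).card

/-- The number of backward arcs of a mixed cycle (relative to its direction). -/
def bCount {G : Multigraph V E} (M : MixedOrientation G) (C : MixedCycle G) : ℕ :=
  haveI : NeZero C.n := ⟨by have := C.two_le; omega⟩
  (Finset.univ.filter fun i : ZMod C.n =>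
    M.orient (C.edge i) = some (C.vert (i + 1), C.vert i)).card

/-- The edge set of a mixed cycle. -/
def cycleEdges [DecidableEq E] {G : Multigraph V E} (C : MixedCycle G) : Finset E :=
  haveI : NeZero C.n := ⟨by have := C.two_le; omega⟩
  Finset.image C.edge Finset.univ

/-- Reachability in `G` using only edges from the set `S`. -/
def ReachIn (G : Multigraph V E) (S : Set E) (u v : V) : Prop :=
  Relation.ReflTransGen (fun x y => ∃ e ∈ S, G.ends e = s(x, y)) u v

/-- A multigraph is connected if every two vertices are joined by a walk. -/
def Multigraph.Connected (G : Multigraph V E) : Prop :=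
  ∀ u v : V, ReachIn G Set.univ u v

/-- All entries of the diagonal `d` are sixth roots of unity `ω^i`, `0 ≤ i ≤ 5`. -/
def IsSixthRoots (d : V → ℂ) : Prop := ∀ v, ∃ i : ℕ, i ≤ 5 ∧ d v = omega6 ^ i

/-- `M''` is obtained from `M'` by a three-way switching: `N(M'') = D⁻¹ N(M') D` for
some diagonal matrix `D` whose diagonal entries are sixth roots of unity. -/
def Switching [Fintype V] [Fintype E] {G : Multigraph V E}
    (M' M'' : MixedOrientation G) : Prop :=
  ∃ d : V → ℂ, IsSixthRoots d ∧
    herm M'' = (Matrix.diagonal d)⁻¹ * herm M' * Matrix.diagonal d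

/-- `M'` is the converse of `M`: every arc of `M` is reversed. -/
def IsConverse {G : Multigraph V E} (M M' : MixedOrientation G) : Prop :=
  ∀ e, M'.orient e = Option.map Prod.swap (M.orient e)

/-- `M'` and `M''` are switching equivalent: one is obtained from the other by a
three-way switching and/or taking a converse. -/
def SwitchEquiv [Fintype V] [Fintype E] {G : Multigraph V E}
    (M' M'' : MixedOrientation G) : Prop :=
  Switching M' M'' ∨ ∃ Mc : MixedOrientation G, IsConverse M' Mc ∧ Switching Mc M''

/-- `T` is (the edge set of) a spanning tree of `G`: it connects all vertices and
contains no cycle. -/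
def IsSpanningTree (G : Multigraph V E) (T : Set E) : Prop :=
  (∀ u v : V, ReachIn G T u v) ∧ ∀ C : MixedCycle G, ¬ (∀ i, C.edge i ∈ T)

/-- `C` is a fundamental cycle with respect to the spanning tree `T`: it uses exactly
one non-tree edge. -/
def IsFundamentalCycle (G : Multigraph V E) (T : Set E) (C : MixedCycle G) : Prop :=
  ∃ e, e ∉ T ∧ ∀ i, C.edge i = e ∨ C.edge i ∈ T

/-! ### Auxiliary lemmas -/

lemma omega6_mul_conj : omega6 * (starRingEnd ℂ) omega6 = 1 := by
  have h3 : Real.sqrt 3 * Real.sqrt 3 = 3 := Real.mul_self_sqrt (by norm_num)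
  apply Complex.ext <;>
    simp [omega6, Complex.mul_re, Complex.mul_im, Complex.conj_re, Complex.conj_im] <;>
    nlinarith [h3]

lemma stepWeight_mul {G : Multigraph V E} (M : MixedOrientation G) {u v : V} {e : E}
    (huv : u ≠ v) (he : G.ends e = s(u, v)) :
    stepWeight M e u v * stepWeight M e v u = 1 := by
  unfold stepWeight
  cases horient : M.orient e with
  | none => simp
  | some p =>
    obtain ⟨a, b⟩ := p
    have hc := M.compat e a b horient
    rw [he] at hc
    rcases Sym2.eq_iff.mp hc.symm with ⟨hau, hbv⟩ | ⟨hav, hbu⟩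
    · subst hau
      dsimp only
      rw [if_pos rfl, if_neg huv]
      exact omega6_mul_conj
    · subst hav
      dsimp only
      rw [if_neg (Ne.symm huv), if_pos rfl, mul_comm]
      exact omega6_mul_conj

lemma stepWeight_swap {G : Multigraph V E} (M : MixedOrientation G) {u v : V} {e : E}
    (huv : u ≠ v) (he : G.ends e = s(u, v)) :
    stepWeight M e v u = (starRingEnd ℂ) (stepWeight M e u v) := by
  unfold stepWeight
  cases horient : M.orient e with
  | none => simp
  | some p =>
    obtain ⟨a, b⟩ := p
    have hc := M.compat e a b horient
    rw [he] at hc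
    rcases Sym2.eq_iff.mp hc.symm with ⟨hau, hbv⟩ | ⟨hav, hbu⟩
    · subst hau
      dsimp only
      rw [if_pos rfl, if_neg huv]
    · subst hav
      dsimp only
      rw [if_neg (Ne.symm huv), if_pos rfl, Complex.conj_conj]

lemma edge_unique {G : Multigraph V E} (hforest : IsEmpty (MixedCycle G)) {u v : V} {e f : E}
    (huv : u ≠ v) (he : G.ends e = s(u, v)) (hf : G.ends f = s(u, v)) : e = f := by
  by_contra hef
  have hcases : ∀ i : ZMod 2, i = 0 ∨ i = 1 := by decide
  refine hforest.false ⟨2, le_refl 2,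
    fun i => if i = 0 then u else v,
    fun i => if i = 0 then e else f, ?_, ?_, ?_⟩
  · intro i j hij
    rcases hcases i with rfl | rfl <;> rcases hcases j with rfl | rfl <;>
      simp_all <;> exact absurd hij (by simp [huv, huv.symm])
  · intro i j hij
    rcases hcases i with rfl | rfl <;> rcases hcases j with rfl | rfl <;>
      simp_all <;> exact absurd hij (by simp [hef, hef.symm])
  · intro i
    rcases hcases i with rfl | rfl
    · simpa using he
    · have h10 : (1 : ZMod 2) ≠ 0 := by decide
      have h11 : (1 + 1 : ZMod 2) = 0 := by decide
      simp only [h10, if_neg, if_false, h11, if_pos rfl]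
      rw [hf]
      exact Sym2.eq_swap

lemma herm_diag [Fintype V] [Fintype E] {G : Multigraph V E} (M : MixedOrientation G) (v : V) :
    herm M v v = 0 := by
  unfold herm
  rw [Matrix.of_apply]
  refine Finset.sum_eq_zero fun e _ => if_neg fun h => G.loopless e ?_
  rw [h]
  exact Sym2.mk_isDiag_iff.mpr rfl

lemma herm_not_adj [Fintype V] [Fintype E] {G : Multigraph V E} (M : MixedOrientation G)
    {u v : V} (h : ∀ e, G.ends e ≠ s(u, v)) : herm M u v = 0 := by
  unfold herm
  rw [Matrix.of_apply]
  exact Finset.sum_eq_zero fun e _ => if_neg (h e)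

lemma herm_apply_edge [Fintype V] [Fintype E] {G : Multigraph V E}
    (hforest : IsEmpty (MixedCycle G)) (M : MixedOrientation G) {u v : V} {e : E}
    (huv : u ≠ v) (he : G.ends e = s(u, v)) : herm M u v = stepWeight M e u v := by
  unfold herm
  rw [Matrix.of_apply, Finset.sum_eq_single e]
  · rw [if_pos he]
  · intro f _ hfe
    exact if_neg fun hf => hfe (edge_unique hforest huv hf he)
  · intro h
    exact absurd (Finset.mem_univ e) h

lemma herm_mul [Fintype V] [Fintype E] {G : Multigraph V E}
    (hforest : IsEmpty (MixedCycle G)) (M : MixedOrientation G) {u v : V} {e : E}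
    (huv : u ≠ v) (he : G.ends e = s(u, v)) : herm M u v * herm M v u = 1 := by
  rw [herm_apply_edge hforest M huv he,
    herm_apply_edge hforest M huv.symm (he.trans Sym2.eq_swap)]
  exact stepWeight_mul M huv he

lemma herm_mul_conj [Fintype V] [Fintype E] {G : Multigraph V E}
    (hforest : IsEmpty (MixedCycle G)) (M : MixedOrientation G) {u v : V} {e : E}
    (huv : u ≠ v) (he : G.ends e = s(u, v)) :
    herm M u v * (starRingEnd ℂ) (herm M u v) = 1 := by
  have h1 : herm M v u = (starRingEnd ℂ) (herm M u v) := by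
    rw [herm_apply_edge hforest M huv he,
      herm_apply_edge hforest M huv.symm (he.trans Sym2.eq_swap)]
    exact stepWeight_swap M huv he
  rw [← h1]
  exact herm_mul hforest M huv he

/-- In a forest, any permutation that moves vertices only along edges is an involution. -/
lemma sigma_involutive [Fintype V] {G : Multigraph V E} (hforest : IsEmpty (MixedCycle G))
    (σ : Equiv.Perm V) (h : ∀ v, σ v = v ∨ ∃ e, G.ends e = s(σ v, v)) :
    ∀ v, σ (σ v) = v := by
  intro v
  by_contra hvv
  have hv1 : σ v ≠ v := fun h1 => hvv (by rw [h1, h1])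
  have hper : Function.IsPeriodicPt σ (orderOf σ) v := by
    show (⇑σ)^[orderOf σ] v = v
    rw [Equiv.Perm.iterate_eq_pow, pow_orderOf_eq_one]
    rfl
  have hnpos : 0 < Function.minimalPeriod σ v := hper.minimalPeriod_pos (orderOf_pos σ)
  have hiter : (⇑σ)^[Function.minimalPeriod σ v] v = v := Function.iterate_minimalPeriod
  have hn1 : Function.minimalPeriod σ v ≠ 1 := by
    intro h1
    rw [h1] at hiter
    exact hv1 hiter
  have hn2 : Function.minimalPeriod σ v ≠ 2 := by
    intro h2
    rw [h2] at hiter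
    apply hvv
    calc σ (σ v) = (⇑σ)^[2] v := by
          rw [show (2 : ℕ) = 1 + 1 from rfl, Function.iterate_succ_apply',
            Function.iterate_one]
      _ = v := hiter
  set n := Function.minimalPeriod σ v with hn
  have hn3 : 3 ≤ n := by omega
  haveI : NeZero n := ⟨by omega⟩
  haveI : Fact (1 < n) := ⟨by omega⟩
  set vert : ZMod n → V := fun i => (⇑σ)^[i.val] v with hvert
  have hvinj : Function.Injective vert := by
    intro i j hij
    have hval : i.val = j.val :=
      Function.iterate_injOn_Iio_minimalPeriod (Set.mem_Iio.2 (ZMod.val_lt i))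
        (Set.mem_Iio.2 (ZMod.val_lt j)) hij
    exact ZMod.val_injective n hval
  have hsucc : ∀ i : ZMod n, vert (i + 1) = σ (vert i) := by
    intro i
    show (⇑σ)^[(i + 1).val] v = σ ((⇑σ)^[i.val] v)
    calc (⇑σ)^[(i + 1).val] v = (⇑σ)^[(i.val + 1) % n] v := by
          rw [ZMod.val_add, ZMod.val_one]
      _ = (⇑σ)^[i.val + 1] v := Function.iterate_mod_minimalPeriod_eq
      _ = σ ((⇑σ)^[i.val] v) := Function.iterate_succ_apply' _ _ _
  have hfix : ∀ i : ZMod n, σ (vert i) ≠ vert i := by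
    intro i hf
    have h2 : (⇑σ)^[n - i.val + i.val] v = v := by
      rw [Nat.sub_add_cancel (le_of_lt (ZMod.val_lt i))]
      exact hiter
    rw [Function.iterate_add_apply] at h2
    have h3 : vert i = v := by
      rw [← h2]
      exact (Function.iterate_fixed hf (n - i.val)).symm
    rw [h3] at hf
    exact hv1 hf
  have hadj : ∀ i : ZMod n, ∃ e, G.ends e = s(vert (i + 1), vert i) := by
    intro i
    rcases h (vert i) with hfx | ⟨e, he⟩
    · exact absurd hfx (hfix i)
    · exact ⟨e, by rw [hsucc]; exact he⟩
  choose edge hedge using hadj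
  refine hforest.false ⟨n, by omega, vert, edge, hvinj, ?_, ?_⟩
  · intro i j hij
    have hends := hedge i
    rw [hij, hedge j] at hends
    rcases Sym2.eq_iff.mp hends with ⟨h1, h2⟩ | ⟨h1, h2⟩
    · exact (hvinj h2).symm
    · have e1 : j + 1 = i := hvinj h1
      have e2 : j = i + 1 := hvinj h2
      have e3 : i + 1 + 1 = i := by rw [← e2]; exact e1
      have h20 : ((2 : ℕ) : ZMod n) = 0 := by
        push_cast
        linear_combination e3
      have hdvd : n ∣ 2 := (ZMod.natCast_eq_zero_iff 2 n).mp h20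
      exact absurd (Nat.le_of_dvd (by norm_num) hdvd) (by omega)
  · intro i
    rw [hedge i]
    exact Sym2.eq_swap

/-- all mixed forests with the same underlying graph are cospectral. -/
theorem forest_cospectral [Fintype V] [Fintype E] {G : Multigraph V E}
    (hforest : IsEmpty (MixedCycle G)) (M M' : MixedOrientation G) :
    (herm M).charpoly = (herm M').charpoly := by
  classical
  unfold Matrix.charpoly
  rw [Matrix.det_apply, Matrix.det_apply]
  refine Finset.sum_congr rfl fun σ _ => ?_
  congr 1
  by_cases hall : ∀ v, σ v = v ∨ ∃ e, G.ends e = s(σ v, v)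
  · -- all moved vertices move along edges: σ is an involution
    have hinv := sigma_involutive hforest σ hall
    set f : V → ℂ := fun v =>
      if σ v = v then 1 else herm M (σ v) v * (starRingEnd ℂ) (herm M' (σ v) v) with hf
    have key : ∀ v, Matrix.charmatrix (herm M) (σ v) v =
        Matrix.charmatrix (herm M') (σ v) v * Polynomial.C (f v) := by
      intro v
      by_cases hfx : σ v = v
      · rw [hfx, Matrix.charmatrix_apply_eq, Matrix.charmatrix_apply_eq, herm_diag, herm_diag]
        simp [hf, hfx]
      · obtain ⟨e, he⟩ := (hall v).resolve_left hfx
        rw [Matrix.charmatrix_apply_ne _ _ _ hfx, Matrix.charmatrix_apply_ne _ _ _ hfx]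
        simp only [hf, hfx, if_false]
        have h1 : herm M' (σ v) v * (starRingEnd ℂ) (herm M' (σ v) v) = 1 :=
          herm_mul_conj hforest M' hfx he
        have h2 : herm M' (σ v) v * (herm M (σ v) v * (starRingEnd ℂ) (herm M' (σ v) v))
            = herm M (σ v) v := by
          linear_combination herm M (σ v) v * h1
        rw [neg_mul, ← Polynomial.C_mul, h2]
    have hprod : ∏ v : V, f v = 1 := by
      refine Finset.prod_ninvolution σ ?_ ?_ (fun a => Finset.mem_univ _) hinv
      · intro a
        by_cases ha : σ a = a
        · simp [hf, ha]
        · have haa : σ (σ a) ≠ σ a := by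
            rw [hinv a]
            exact fun hh => ha hh.symm
          obtain ⟨e, he⟩ := (hall a).resolve_left ha
          have he' : G.ends e = s(a, σ a) := he.trans Sym2.eq_swap
          have hM : herm M (σ a) a * herm M a (σ a) = 1 := herm_mul hforest M ha he
          have hM' : herm M' (σ a) a * herm M' a (σ a) = 1 := herm_mul hforest M' ha he
          have hM'c : (starRingEnd ℂ) (herm M' (σ a) a) * (starRingEnd ℂ) (herm M' a (σ a))
              = 1 := by rw [← map_mul, hM', map_one]
          simp only [hf, ha, if_false, haa, hinv a]
          rw [if_neg (fun h' : a = σ a => ha h'.symm)]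
          calc herm M (σ a) a * (starRingEnd ℂ) (herm M' (σ a) a) *
                (herm M a (σ a) * (starRingEnd ℂ) (herm M' a (σ a)))
              = (herm M (σ a) a * herm M a (σ a)) *
                ((starRingEnd ℂ) (herm M' (σ a) a) * (starRingEnd ℂ) (herm M' a (σ a))) := by
                ring
            _ = 1 := by rw [hM, hM'c, mul_one]
      · intro a hfa ha
        exact hfa (by simp [hf, ha])
    calc ∏ v : V, Matrix.charmatrix (herm M) (σ v) v
        = ∏ v : V, (Matrix.charmatrix (herm M') (σ v) v * Polynomial.C (f v)) :=
          Finset.prod_congr rfl fun v _ => key v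
      _ = (∏ v : V, Matrix.charmatrix (herm M') (σ v) v) * ∏ v : V, Polynomial.C (f v) :=
          Finset.prod_mul_distrib
      _ = ∏ v : V, Matrix.charmatrix (herm M') (σ v) v := by
          rw [← map_prod, hprod, map_one, mul_one]
  · -- some vertex moves along a non-edge: both products vanish
    push_neg at hall
    obtain ⟨v, hv1, hv2⟩ := hall
    rw [Finset.prod_eq_zero (Finset.mem_univ v), Finset.prod_eq_zero (Finset.mem_univ v)]
    · rw [Matrix.charmatrix_apply_ne _ _ _ hv1, herm_not_adj M' hv2]
      simp
    · rw [Matrix.charmatrix_apply_ne _ _ _ hv1, herm_not_adj M hv2]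
      simp

end
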